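/- For fixed k ≥ 0, the minimum length λ_k(n) of an (n,k)-universal word satisfies λ_k(n) ≤ (n-1)(n-k) + 1 and λ_k(n) ≥ λ(n) - (n-1)k - 1, where λ(n) is the minimum length of an n-universal word. Consequently λ_k(n) = n² - o(n²). -/

import Mathlib

open Asymptotics Filter

/-- A word over alphabet `[n]` is `(n,k)`-universal if it contains as subwords all
words of length `n - k` without repeated letters. -/
def NKUniversal (n k : ℕ) (W : List (Fin n)) : Prop :=
  ∀ u : List (Fin n), u.Nodup → u.length = n - k → u.Sublist W

/-- `λ_k(n)`: the minimum length of an `(n,k)`-universal word. -/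
noncomputable def lamK (n k : ℕ) : ℕ :=
  sInf {l : ℕ | ∃ W : List (Fin n), W.length = l ∧ NKUniversal n k W}

namespace LamKAux

def blk (n : ℕ) : ℕ → Bool → List ℕ
  | 0, _ => []
  | m + 1, b =>
      (if b then List.range' 1 (n - 1) else (List.range' 0 (n - 1)).reverse) ++ blk n m (!b)

def tailW (n : ℕ) : Bool → ℕ → List ℕ
  | true, v => List.range' (v + 1) (n - 1 - v)
  | false, v => (List.range' 0 v).reverse

lemma range'_split (s a b c : ℕ) (h : c = a + b) :
    List.range' s c = List.range' s a ++ List.range' (s + a) b := by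
  subst h
  have := (List.range'_append (s := s) (m := a) (n := b) (step := 1)).symm
  rw [Nat.one_mul] at this
  simpa using this

lemma range'_zero_succ (a : ℕ) : List.range' 0 (a + 1) = List.range' 0 a ++ [a] := by
  simpa using List.range'_concat (step := 1) (s := 0) (n := a)

lemma sublist_app_left {l l₂ : List ℕ} (l₁ : List ℕ) (h : l.Sublist l₂) :
    l.Sublist (l₁ ++ l₂) := h.trans (List.sublist_append_right l₁ l₂)

lemma key (n : ℕ) : ∀ (u : List ℕ), (∀ x ∈ u, x < n) → u.Chain' (· ≠ ·) →
    ∀ (m : ℕ) (b : Bool) (v : ℕ), v < n → u.length ≤ m → (∀ y ∈ u.head?, v ≠ y) →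
    u.Sublist (tailW n b v ++ blk n m (!b)) := by
  intro u
  induction u with
  | nil => intro _ _ m b v _ _ _; exact List.nil_sublist _
  | cons a u' ih =>
    intro hlt hc m b v hv hlen hhd
    have ha : a < n := hlt a (List.mem_cons_self (a := a) (l := u'))
    have hav : v ≠ a := hhd a rfl
    replace hc := List.isChain_cons.mp hc
    have hc' := hc.2
    have hhd' : ∀ y ∈ u'.head?, a ≠ y := hc.1
    have hlt' : ∀ x ∈ u', x < n := fun x hx => hlt x (List.mem_cons_of_mem a hx)
    have hlen1 : u'.length + 1 ≤ m := by simpa using hlen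
    cases b with
    | true =>
      by_cases hcmp : v < a
      · -- stay in the ascending block
        have heq : tailW n true v ++ blk n m (!true) =
            List.range' (v + 1) (a - (v + 1)) ++
              (a :: (tailW n true a ++ blk n m (!true))) := by
          show List.range' (v + 1) (n - 1 - v) ++ _ = _
          rw [range'_split (v + 1) (a - (v + 1)) (n - a) _ (by omega),
            show v + 1 + (a - (v + 1)) = a by omega,
            show n - a = (n - 1 - a) + 1 by omega, List.range'_succ]
          simp [tailW, List.append_assoc]
        rw [heq]
        exact sublist_app_left _
          ((ih hlt' hc' m true a ha (by omega) hhd').cons₂ a)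
      · push_neg at hcmp
        have hva : a < v := lt_of_le_of_ne hcmp (Ne.symm hav)
        cases m with
        | zero => simp at hlen
        | succ m' =>
          have heq : tailW n true v ++ blk n (m' + 1) (!true) =
              (tailW n true v ++ (List.range' (a + 1) (n - 1 - (a + 1))).reverse) ++
                (a :: (tailW n false a ++ blk n m' (!false))) := by
            show _ = _
            rw [show (!true) = false from rfl, show blk n (m' + 1) false =
              (List.range' 0 (n - 1)).reverse ++ blk n m' true by simp [blk]]
            rw [range'_split 0 (a + 1) (n - 1 - (a + 1)) (n - 1) (by omega),
              range'_zero_succ a]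
            simp [tailW, List.reverse_append, List.append_assoc]
          rw [heq]
          exact sublist_app_left _
            ((ih hlt' hc' m' false a ha (by omega) hhd').cons₂ a)
    | false =>
      by_cases hcmp : a < v
      · -- stay in the descending block
        have heq : tailW n false v ++ blk n m (!false) =
            (List.range' (a + 1) (v - (a + 1))).reverse ++
              (a :: (tailW n false a ++ blk n m (!false))) := by
          show (List.range' 0 v).reverse ++ _ = _
          rw [range'_split 0 (a + 1) (v - (a + 1)) v (by omega),
            range'_zero_succ a]
          simp [tailW, List.reverse_append, List.append_assoc]
        rw [heq]
        exact sublist_app_left _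
          ((ih hlt' hc' m false a ha (by omega) hhd').cons₂ a)
      · push_neg at hcmp
        have hva : v < a := lt_of_le_of_ne hcmp hav
        cases m with
        | zero => simp at hlen
        | succ m' =>
          have heq : tailW n false v ++ blk n (m' + 1) (!false) =
              (tailW n false v ++ List.range' 1 (a - 1)) ++
                (a :: (tailW n true a ++ blk n m' (!true))) := by
            rw [show (!false) = true from rfl, show blk n (m' + 1) true =
              List.range' 1 (n - 1) ++ blk n m' false by simp [blk]]
            rw [range'_split 1 (a - 1) (n - a) (n - 1) (by omega),
              show 1 + (a - 1) = a by omega,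
              show n - a = (n - 1 - a) + 1 by omega, List.range'_succ]
            simp [tailW, List.append_assoc]
          rw [heq]
          exact sublist_app_left _
            ((ih hlt' hc' m' true a ha (by omega) hhd').cons₂ a)


def wordN (n m : ℕ) : List ℕ := 0 :: blk n m true

lemma length_blk (n m : ℕ) (b : Bool) : (blk n m b).length = m * (n - 1) := by
  induction m generalizing b with
  | zero => simp [blk]
  | succ m ih =>
      cases b <;> simp [blk, ih, Nat.succ_mul, Nat.add_comm]

lemma mem_blk_lt (n m : ℕ) (b : Bool) : ∀ x ∈ blk n m b, x < n := by
  induction m generalizing b with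
  | zero => simp [blk]
  | succ m ih =>
      intro x hx
      simp only [blk] at hx
      rcases List.mem_append.mp hx with hx | hx
      · split at hx
        · obtain ⟨i, hi, rfl⟩ := List.mem_range'.mp hx; omega
        · rw [List.mem_reverse] at hx
          obtain ⟨i, hi, rfl⟩ := List.mem_range'.mp hx; omega
      · exact ih b.not x hx

lemma wordN_universal (n : ℕ) (hn : 1 ≤ n) (m : ℕ) (u : List ℕ)
    (hlt : ∀ x ∈ u, x < n) (hc : u.Chain' (· ≠ ·)) (hlen : u.length ≤ m) :
    u.Sublist (wordN n m) := by
  cases u with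
  | nil => exact List.nil_sublist _
  | cons a u' =>
    have hlen1 : u'.length + 1 ≤ m := by simpa using hlen
    replace hc := List.isChain_cons.mp hc
    by_cases ha : a = 0
    · subst ha
      refine List.Sublist.cons₂ 0 ?_
      have := key n u' (fun x hx => hlt x (List.mem_cons_of_mem _ hx)) hc.2 m false 0
        hn (by omega) (fun y hy => (hc.1 y hy).symm ∘ Eq.symm)
      simpa [tailW] using this
    · refine List.Sublist.cons 0 ?_
      have := key n (a :: u') hlt (List.isChain_cons.mpr hc) m false 0
        hn hlen (by intro y hy; simp at hy; omega)
      simpa [tailW] using this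

lemma map_val_sublist {n : ℕ} {u W : List (Fin n)}
    (h : (u.map Fin.val).Sublist (W.map Fin.val)) : u.Sublist W := by
  obtain ⟨l', hs, he⟩ := List.sublist_map_iff.mp h
  rwa [(List.map_injective_iff.mpr Fin.val_injective) he]

lemma exists_univ (n k : ℕ) (hn : 1 ≤ n) :
    ∃ W : List (Fin n), W.length = (n - 1) * (n - k) + 1 ∧ NKUniversal n k W := by
  set WN := wordN n (n - k) with hWN
  have hltW : ∀ x ∈ WN, x < n := by
    intro x hx
    rcases List.mem_cons.mp hx with rfl | hx
    · omega
    · exact mem_blk_lt n (n - k) true x hx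
  refine ⟨WN.attach.map (fun x => (⟨x.1, hltW x.1 x.2⟩ : Fin n)), ?_, ?_⟩
  · simp [hWN, wordN, length_blk, Nat.mul_comm]
  · intro u hu hlen
    apply map_val_sublist
    have hmap : (WN.attach.map (fun x => (⟨x.1, hltW x.1 x.2⟩ : Fin n))).map Fin.val = WN := by
      rw [List.map_map]
      exact List.attach_map_subtype_val WN
    rw [hmap]
    apply wordN_universal n hn (n - k)
    · intro x hx
      obtain ⟨y, _, rfl⟩ := List.mem_map.mp hx
      exact y.isLt
    · exact (hu.map Fin.val_injective).isChain
    · simp [hlen]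

lemma zero_case (k : ℕ) : lamK 0 k = 0 := by
  have : (0 : ℕ) ∈ {l : ℕ | ∃ W : List (Fin 0), W.length = l ∧ NKUniversal 0 k W} := by
    refine ⟨[], rfl, ?_⟩
    intro u _ hlen
    have : u = [] := List.length_eq_zero_iff.mp (by omega)
    simp [this]
  exact Nat.le_zero.mp (Nat.sInf_le this)

lemma lamK_set_nonempty (n k : ℕ) :
    {l : ℕ | ∃ W : List (Fin n), W.length = l ∧ NKUniversal n k W}.Nonempty := by
  rcases Nat.eq_zero_or_pos n with rfl | hn
  · refine ⟨0, [], rfl, ?_⟩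
    intro u _ hlen
    have : u = [] := List.length_eq_zero_iff.mp (by omega)
    simp [this]
  · obtain ⟨W, hW, hU⟩ := exists_univ n k hn
    exact ⟨W.length, W, rfl, hU⟩

lemma part1 (n k : ℕ) : lamK n k ≤ (n - 1) * (n - k) + 1 := by
  rcases Nat.eq_zero_or_pos n with rfl | hn
  · simp [zero_case]
  · obtain ⟨W, hW, hU⟩ := exists_univ n k hn
    exact Nat.sInf_le ⟨W, hW, hU⟩

lemma universal_of_zero {n k : ℕ} {W : List (Fin n)} (h : NKUniversal n 0 W) :
    NKUniversal n k W := by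
  intro u hu hlen
  classical
  set w := u ++ (List.finRange n).filter (fun x => x ∉ u) with hw
  have hwnd : w.Nodup := by
    refine List.Nodup.append hu ((List.nodup_finRange n).filter _) ?_
    intro x hx hx'
    have := List.of_mem_filter hx'
    simp at this
    exact this hx
  have hmem : ∀ x : Fin n, x ∈ w := by
    intro x
    by_cases hx : x ∈ u
    · exact List.mem_append_left _ hx
    · exact List.mem_append_right _ (List.mem_filter.mpr ⟨List.mem_finRange x, by simpa⟩)
  have hwlen : w.length = n := by
    have h1 : w.toFinset.card = w.length := List.toFinset_card_of_nodup hwnd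
    have h2 : w.toFinset = Finset.univ := Finset.eq_univ_iff_forall.mpr
      (fun x => List.mem_toFinset.mpr (hmem x))
    rw [h2] at h1
    simpa using h1.symm
  have hsub : w.Sublist W := h w hwnd (by simpa using hwlen)
  exact (List.sublist_append_left u _).trans hsub

lemma lamK_le_lamK_zero (n k : ℕ) : lamK n k ≤ lamK n 0 := by
  obtain ⟨W, hW, hU⟩ := Nat.sInf_mem (lamK_set_nonempty n 0)
  exact Nat.sInf_le ⟨W, hW, universal_of_zero hU⟩

lemma part2 (n k : ℕ) : lamK n 0 ≤ lamK n k + (n - 1) * k + 1 := by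
  rcases Nat.eq_zero_or_pos n with rfl | hn
  · simp [zero_case]
  · obtain ⟨W, hW, hU⟩ := Nat.sInf_mem (lamK_set_nonempty n k)
    obtain ⟨V, hV, hVU⟩ := exists_univ n (n - k) hn
    have hWV : NKUniversal n 0 (W ++ V) := by
      intro u hu hlen
      have h1 : (u.take (n - k)).Sublist W := by
        refine hU _ (hu.sublist (List.take_sublist _ _)) ?_
        rw [List.length_take, hlen]
        omega
      have h2 : (u.drop (n - k)).Sublist V := by
        refine hVU _ (hu.sublist (List.drop_sublist _ _)) ?_
        rw [List.length_drop, hlen]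
        omega
      have := List.Sublist.append h1 h2
      rwa [List.take_append_drop] at this
    have hle : lamK n 0 ≤ W.length + V.length := by
      refine Nat.sInf_le ⟨W ++ V, ?_, hWV⟩
      simp
    have hVle : V.length ≤ (n - 1) * k + 1 := by
      rw [hV]
      have h3 : n - (n - k) ≤ k := by omega
      exact Nat.add_le_add_right (Nat.mul_le_mul_left _ h3) 1
    have hW' : W.length = lamK n k := hW
    omega

lemma nat_isLittleO_sq :
    (fun n : ℕ => (n : ℝ)) =o[atTop] (fun n : ℕ => (n : ℝ) ^ 2) := by
  have h : (fun x : ℝ => x ^ 1) =o[atTop] (fun x : ℝ => x ^ 2) :=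
    Asymptotics.isLittleO_pow_pow_atTop_of_lt (by norm_num)
  have := h.comp_tendsto (tendsto_natCast_atTop_atTop (R := ℝ))
  simpa [Function.comp_def] using this

end LamKAux

/-- for fixed `k`, `λ_k(n) ≤ (n-1)(n-k) + 1` and
`λ(n) ≤ λ_k(n) + (n-1)k + 1` (i.e. `λ_k(n) ≥ λ(n) - (n-1)k - 1`, where
`λ(n) = λ_0(n)`); consequently, since `λ(n) = n² - o(n²)`, also
`λ_k(n) = n² - o(n²)`. -/
theorem lamK_bounds_and_asymptotics (k : ℕ) :
    (∀ n : ℕ, lamK n k ≤ (n - 1) * (n - k) + 1) ∧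
      (∀ n : ℕ, lamK n 0 ≤ lamK n k + (n - 1) * k + 1) ∧
      (((fun n : ℕ => (n : ℝ) ^ 2 - lamK n 0) =o[atTop] fun n : ℕ => (n : ℝ) ^ 2) →
        ((fun n : ℕ => (n : ℝ) ^ 2 - lamK n k) =o[atTop] fun n : ℕ => (n : ℝ) ^ 2)) := by
  refine ⟨fun n => LamKAux.part1 n k, fun n => LamKAux.part2 n k, ?_⟩
  intro h0
  have hdiff : (fun n : ℕ => ((lamK n 0 : ℝ) - (lamK n k : ℝ))) =o[atTop]
      (fun n : ℕ => (n : ℝ) ^ 2) := by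
    have hbig : (fun n : ℕ => ((lamK n 0 : ℝ) - (lamK n k : ℝ))) =O[atTop]
        (fun n : ℕ => (n : ℝ)) := by
      rw [Asymptotics.isBigO_iff]
      refine ⟨(k : ℝ) + 2, ?_⟩
      filter_upwards [eventually_ge_atTop 1] with n hn
      have h1 : lamK n k ≤ lamK n 0 := LamKAux.lamK_le_lamK_zero n k
      have h2 : lamK n 0 ≤ lamK n k + (n - 1) * k + 1 := LamKAux.part2 n k
      have hc : lamK n 0 ≤ lamK n k + (n * k + n) := by
        have h3 : (n - 1) * k + 1 ≤ n * k + n := by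
          have := Nat.mul_le_mul_right k (Nat.sub_le n 1)
          omega
        omega
      have hcr : (lamK n 0 : ℝ) ≤ (lamK n k : ℝ) + ((n : ℝ) * k + n) := by
        have := (Nat.cast_le (α := ℝ)).mpr hc
        push_cast at this
        linarith
      have hb : (lamK n 0 : ℝ) - (lamK n k : ℝ) ≤ ((k : ℝ) + 2) * n := by nlinarith
      have hnn : (0 : ℝ) ≤ (lamK n 0 : ℝ) - (lamK n k : ℝ) := by
        have := (Nat.cast_le (α := ℝ)).mpr h1
        linarith
      rw [Real.norm_eq_abs, Real.norm_eq_abs, abs_of_nonneg hnn,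
        abs_of_nonneg (by positivity : (0:ℝ) ≤ (n : ℝ))]
      exact hb
    exact hbig.trans_isLittleO LamKAux.nat_isLittleO_sq
  have heq : (fun n : ℕ => (n : ℝ) ^ 2 - lamK n k) =
      (fun n : ℕ => ((n : ℝ) ^ 2 - lamK n 0) + ((lamK n 0 : ℝ) - (lamK n k : ℝ))) := by
    funext n; ring
  rw [heq]
  exact h0.add hdiff
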